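/- arXiv:2603.15176 — 2 statements merged into one kernel-verified Lean document; each statement's English description precedes it below -/
import Mathlib

section
/- In the dynamic network creation game in which players' communication cost uses the temporal shortest distance, for every real atomic cost α > 0 and every number of players n ≥ 2, every Nash equilibrium s has finite social cost; equivalently, its communication temporal graph 𝒢[s] is temporally connected, i.e., d_{𝒢[s]}(u, v) < ∞ for every ordered pair of vertices u, v. -/
open scoped ENNReal BigOperators

/-- A temporal path from `u` to `v`, given as a list of steps `(next vertex, time label)`.
The labelling `lab` gives, for each (ordered) pair of vertices, the set of time labels of the
edge joining them (empty if there is no edge); it is symmetric for temporal graphs arising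
from strategy profiles.  The conditions say that consecutive steps use time labels belonging
to the corresponding edge, that time labels strictly increase along the path, that no vertex is
repeated, and that the path ends at `v`. -/
def IsTemporalPath {V : Type*} (lab : V → V → Set ℕ) (u v : V) (p : List (V × ℕ)) : Prop :=
  List.Chain (fun a b => b.2 ∈ lab a.1 b.1) (u, 0) p ∧
  List.Chain' (· < ·) (p.map Prod.snd) ∧
  (u :: p.map Prod.fst).Nodup ∧
  (u :: p.map Prod.fst).getLast (List.cons_ne_nil _ _) = v

/-- The temporal shortest distance from `u` to `v`: the least number of edges of a temporal
path from `u` to `v` (`0` if `u = v`, `⊤` if there is no temporal path). -/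
noncomputable def temporalDist {V : Type*} (lab : V → V → Set ℕ) (u v : V) : ℕ∞ :=
  sInf {n : ℕ∞ | ∃ p : List (V × ℕ), IsTemporalPath lab u v p ∧ (p.length : ℕ∞) = n}

/-- The labelling of the communication temporal graph `𝒢[s]` of a strategy profile `s`:
`t` is a label of the edge `uv` iff `(u, t) ∈ s v` or `(v, t) ∈ s u`. -/
def profLab {V : Type*} (s : V → Finset (V × ℕ)) : V → V → Set ℕ :=
  fun u v => {t | (u, t) ∈ s v ∨ (v, t) ∈ s u}

/-- The (finite) set of time labels of the edge `uv` in the communication temporal graph. -/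
def labelFinset {V : Type*} [DecidableEq V] (s : V → Finset (V × ℕ)) (u v : V) : Finset ℕ :=
  (((s v).filter (fun p => p.1 = u)).image Prod.snd) ∪
    (((s u).filter (fun p => p.1 = v)).image Prod.snd)

/-- The total number of time labels `∑ e ∈ E, |λ(e)|` of the communication temporal graph
(each unordered pair is counted once, whence the division by `2`). -/
def numLabels {V : Type*} [Fintype V] [DecidableEq V] (s : V → Finset (V × ℕ)) : ℕ :=
  (∑ u : V, ∑ v : V, if u = v then 0 else (labelFinset s u v).card) / 2

/-- The number of edges `|E|` of the communication temporal graph. -/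
def numEdges {V : Type*} [Fintype V] [DecidableEq V] (s : V → Finset (V × ℕ)) : ℕ :=
  ((Finset.univ : Finset (V × V)).filter
    (fun q => q.1 ≠ q.2 ∧ (labelFinset s q.1 q.2).Nonempty)).card / 2

/-- The social cost `c[s] = α·∑_{e ∈ E} |λ(e)| + ∑_{(u,v) ∈ V×V} d_{𝒢[s]}(u,v)`
of a strategy profile `s` for atomic cost `α`. -/
noncomputable def socialCost {V : Type*} [Fintype V] [DecidableEq V]
    (α : ℝ) (s : V → Finset (V × ℕ)) : ℝ≥0∞ :=
  ENNReal.ofReal α * (numLabels s : ℝ≥0∞) +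
    ∑ u : V, ∑ v : V, (temporalDist (profLab s) u v : ℝ≥0∞)

/-- The individual cost `c[s](v) = α·|s(v)| + ∑_{w ∈ V} d_{𝒢[s]}(v,w)` of player `v`. -/
noncomputable def indivCost {V : Type*} [Fintype V]
    (α : ℝ) (s : V → Finset (V × ℕ)) (v : V) : ℝ≥0∞ :=
  ENNReal.ofReal α * ((s v).card : ℝ≥0∞) +
    ∑ w : V, (temporalDist (profLab s) v w : ℝ≥0∞)

/-- A strategy profile is a Nash equilibrium if no player can strictly decrease its individual
cost by changing only its own strategy. -/
def IsNash {V : Type*} [Fintype V] [DecidableEq V] (α : ℝ) (s : V → Finset (V × ℕ)) : Prop :=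
  ∀ (v : V) (t : Finset (V × ℕ)),
    ¬ indivCost α (Function.update s v t) v < indivCost α s v

/-- The optimal social cost `c*(α, n)`: the minimum social cost over all strategy profiles
with `n` players and atomic cost `α`. -/
noncomputable def optCost (α : ℝ) (n : ℕ) : ℝ≥0∞ :=
  ⨅ s : Fin n → Finset (Fin n × ℕ), socialCost α s

/-- The price of anarchy `PoA(α, n)`: the maximum social cost of a Nash equilibrium with `n`
players and atomic cost `α`, divided by the optimal social cost `c*(α, n)`. -/
noncomputable def PoA (α : ℝ) (n : ℕ) : ℝ≥0∞ :=
  (⨆ s : {s : Fin n → Finset (Fin n × ℕ) // IsNash α s}, socialCost α s.1) / optCost α n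

/-- The price of stability `PoS(α, n)`: the minimum social cost of a Nash equilibrium with `n`
players and atomic cost `α`, divided by the optimal social cost `c*(α, n)`. -/
noncomputable def PoS (α : ℝ) (n : ℕ) : ℝ≥0∞ :=
  (⨅ s : {s : Fin n → Finset (Fin n × ℕ) // IsNash α s}, socialCost α s.1) / optCost α n

lemma temporalDist_self {V : Type*} (lab : V → V → Set ℕ) (u : V) :
    temporalDist lab u u = 0 := by
  refine le_antisymm (sInf_le ?_) zero_le
  exact ⟨[], ⟨List.Chain.nil, List.isChain_nil, by simp, by simp⟩, by simp⟩

lemma temporalDist_le_one {V : Type*} (lab : V → V → Set ℕ) {u w : V}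
    (h : 0 ∈ lab u w) (hne : u ≠ w) : temporalDist lab u w ≤ 1 := by
  refine sInf_le ⟨[(w, 0)], ⟨?_, ?_, ?_, ?_⟩, by simp⟩
  · exact List.chain_cons.2 ⟨h, List.Chain.nil⟩
  · exact List.isChain_singleton _
  · simp [hne]
  · simp

lemma temporalDist_lt_top_aux (α : ℝ) (hα : 0 < α) (n : ℕ)
    (s : Fin n → Finset (Fin n × ℕ)) (hs : IsNash α s) (u v : Fin n) :
    temporalDist (profLab s) u v < ⊤ := by
  by_contra h
  have hdv : temporalDist (profLab s) u v = ⊤ := by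
    simpa [lt_top_iff_ne_top] using h
  -- the current individual cost of u is ⊤
  have hold : indivCost α s u = ⊤ := by
    unfold indivCost
    rw [ENNReal.add_eq_top]
    right
    rw [ENNReal.sum_eq_top]
    exact ⟨v, Finset.mem_univ v, by simp [hdv]⟩
  -- deviation: buy an edge to every vertex at time 0
  set t : Finset (Fin n × ℕ) := Finset.univ.image (fun w => (w, 0)) with ht
  set s' := Function.update s u t with hs'
  have hmem : ∀ w : Fin n, (w, 0) ∈ s' u := by
    intro w
    simp [hs', ht, Function.update_self]
  have hnew : indivCost α s' u < ⊤ := by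
    unfold indivCost
    refine ENNReal.add_lt_top.2 ⟨?_, ?_⟩
    · exact ENNReal.mul_lt_top ENNReal.ofReal_lt_top (by simp)
    · refine ENNReal.sum_lt_top.2 fun w _ => ?_
      rcases eq_or_ne u w with rfl | hne
      · simp [temporalDist_self]
      · have h0 : (0 : ℕ) ∈ profLab s' u w := Or.inr (hmem w)
        have := temporalDist_le_one (profLab s') h0 hne
        calc ((temporalDist (profLab s') u w : ℕ∞) : ℝ≥0∞)
            ≤ ((1 : ℕ∞) : ℝ≥0∞) := by exact_mod_cast this
          _ < ⊤ := by simp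
  exact hs u t (by rw [hold]; exact hnew)

/-- For every atomic cost `α > 0` and every number of players `n ≥ 2`, every Nash
equilibrium has finite social cost; equivalently, its communication temporal graph is
temporally connected, i.e. all temporal distances are finite. -/
theorem statement_8 (α : ℝ) (hα : 0 < α) (n : ℕ) (hn : 2 ≤ n)
    (s : Fin n → Finset (Fin n × ℕ)) (hs : IsNash α s) :
    socialCost α s < ⊤ ∧ ∀ u v : Fin n, temporalDist (profLab s) u v < ⊤ := by
  have hd : ∀ u v : Fin n, temporalDist (profLab s) u v < ⊤ :=
    temporalDist_lt_top_aux α hα n s hs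
  refine ⟨?_, hd⟩
  unfold socialCost
  refine ENNReal.add_lt_top.2 ⟨?_, ?_⟩
  · exact ENNReal.mul_lt_top ENNReal.ofReal_lt_top (by simp)
  · refine ENNReal.sum_lt_top.2 fun u _ => ENNReal.sum_lt_top.2 fun v _ => ?_
    have hne := (hd u v).ne
    lift temporalDist (profLab s) u v to ℕ using hne with k
    simp
end

section
/- In the dynamic network creation game in which players' communication cost uses the temporal shortest distance, for every real atomic cost α with 0 < α < 1 and every number of players n ≥ 2, the communication temporal graph of every Nash equilibrium has d_{𝒢[s]}(u, v) = 1 for every ordered pair of distinct vertices u, v; in particular its underlying graph is the complete graph K_n. -/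
open scoped ENNReal BigOperators

section Aux
variable {V : Type*}

lemma td_self (lab : V → V → Set ℕ) (u : V) : temporalDist lab u u = 0 := by
  refine le_antisymm (sInf_le ⟨[], ⟨List.Chain.nil, List.isChain_nil, by simp, by simp⟩, by simp⟩)
    zero_le

lemma td_le_one (lab : V → V → Set ℕ) {u v : V} (h : u ≠ v) {t : ℕ} (ht : t ∈ lab u v) :
    temporalDist lab u v ≤ 1 :=
  sInf_le ⟨[(v, t)], ⟨List.chain_cons.2 ⟨ht, List.Chain.nil⟩, List.isChain_singleton _, by simp [h],
    by simp⟩, by simp⟩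

lemma one_le_td (lab : V → V → Set ℕ) {u v : V} (h : u ≠ v) :
    1 ≤ temporalDist lab u v := by
  refine le_sInf ?_
  rintro m ⟨p, ⟨_, _, _, hlast⟩, rfl⟩
  match p with
  | [] => simp at hlast; exact absurd hlast h
  | a :: l =>
      have : 1 ≤ (a :: l).length := Nat.succ_le_succ (Nat.zero_le _)
      exact_mod_cast this

lemma two_le_td (lab : V → V → Set ℕ) {u v : V} (h : u ≠ v) (hlab : lab u v = ∅) :
    2 ≤ temporalDist lab u v := by
  refine le_sInf ?_
  rintro m ⟨p, ⟨hchain, _, _, hlast⟩, rfl⟩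
  match p with
  | [] => simp at hlast; exact absurd hlast h
  | [a] =>
      have h1 : a.1 = v := by simpa using hlast
      have h2 : a.2 ∈ lab u a.1 := (List.chain_cons.1 hchain).1
      rw [h1, hlab] at h2
      exact absurd h2 (Set.notMem_empty _)
  | a :: b :: l =>
      have : 2 ≤ (a :: b :: l).length := Nat.succ_le_succ (Nat.succ_le_succ (Nat.zero_le _))
      exact_mod_cast this

lemma td_mono {lab lab' : V → V → Set ℕ} (hsub : ∀ x y, lab x y ⊆ lab' x y) (u v : V) :
    temporalDist lab' u v ≤ temporalDist lab u v := by
  apply sInf_le_sInf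
  rintro m ⟨p, ⟨hc, h2, h3, h4⟩, rfl⟩
  exact ⟨p, ⟨List.IsChain.imp (fun a b hb => hsub _ _ hb) hc, h2, h3, h4⟩, rfl⟩

lemma profLab_mono {s s' : V → Finset (V × ℕ)} (h : ∀ z, s z ⊆ s' z) (x y : V) :
    profLab s x y ⊆ profLab s' x y :=
  fun t ht => ht.imp (fun h' => h y h') (fun h' => h x h')

end Aux

/-- For every atomic cost `0 < α < 1` and every number of players `n ≥ 2`, the communication
temporal graph of every Nash equilibrium has temporal distance `1` between every ordered
pair of distinct vertices; in particular its underlying graph is the complete graph `K_n`. -/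


theorem statement_9 (α : ℝ) (hα0 : 0 < α) (hα1 : α < 1) (n : ℕ) (hn : 2 ≤ n)
    (s : Fin n → Finset (Fin n × ℕ)) (hs : IsNash α s) :
    ∀ u v : Fin n, u ≠ v →
      temporalDist (profLab s) u v = 1 ∧ profLab s u v ≠ ∅ := by
  
  intro u v huv
  -- Step 1: the individual cost of player u is finite, hence all distances from u are finite
  have hfin : indivCost α s u ≠ ⊤ := by
    intro htop
    set t0 : Finset (Fin n × ℕ) := Finset.univ.image (fun w => (w, 0)) with ht0
    apply hs u t0
    rw [htop]
    have hbound : indivCost α (Function.update s u t0) u ≤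
        ENNReal.ofReal α * (n : ℝ≥0∞) + (n : ℝ≥0∞) := by
      rw [indivCost, Function.update_self]
      gcongr
      · have : t0.card ≤ n := le_trans Finset.card_image_le (by simp)
        exact_mod_cast this
      · calc ∑ w : Fin n, (temporalDist (profLab (Function.update s u t0)) u w : ℝ≥0∞)
            ≤ ∑ _w : Fin n, (1 : ℝ≥0∞) := by
              refine Finset.sum_le_sum (fun w _ => ?_)
              by_cases hw : u = w
              · subst hw; simp [td_self]
              · have h0 : (0 : ℕ) ∈ profLab (Function.update s u t0) u w :=
                  Or.inr (by simp [Function.update_self, ht0])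
                exact_mod_cast td_le_one _ hw h0
          _ = (n : ℝ≥0∞) := by simp
    refine lt_of_le_of_lt hbound ?_
    exact ENNReal.add_lt_top.2 ⟨ENNReal.mul_lt_top ENNReal.ofReal_lt_top (by simp),
      ENNReal.natCast_lt_top n⟩
  have hsum_ne : (∑ w : Fin n, (temporalDist (profLab s) u w : ℝ≥0∞)) ≠ ⊤ :=
    (ENNReal.add_ne_top.1 hfin).2
  have hd_ne : ∀ w : Fin n, (temporalDist (profLab s) u w : ℝ≥0∞) ≠ ⊤ :=
    fun w => ENNReal.sum_ne_top.1 hsum_ne w (Finset.mem_univ w)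
  -- Step 2: the edge uv exists
  have hlabne : profLab s u v ≠ ∅ := by
    intro hlab
    have h2 : (2 : ℕ∞) ≤ temporalDist (profLab s) u v := two_le_td _ huv hlab
    set t1 : Finset (Fin n × ℕ) := insert (v, (0 : ℕ)) (s u) with ht1
    set s' := Function.update s u t1 with hs'
    have hsub : ∀ z, s z ⊆ s' z := by
      intro z
      by_cases hz : z = u
      · subst hz; rw [hs', Function.update_self, ht1]; exact Finset.subset_insert _ _
      · rw [hs', Function.update_of_ne hz]
    apply hs u t1
    have hmem : ((v, 0) : Fin n × ℕ) ∈ s' u := by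
      rw [hs', Function.update_self, ht1]
      exact Finset.mem_insert_self _ _
    have h0v : (0 : ℕ) ∈ profLab s' u v := Or.inr hmem
    have hd'v : temporalDist (profLab s') u v ≤ 1 := td_le_one _ huv h0v
    set A : ℝ≥0∞ := ENNReal.ofReal α * ((s u).card : ℝ≥0∞) with hA
    set S : ℝ≥0∞ := ∑ w ∈ Finset.univ.erase v, (temporalDist (profLab s) u w : ℝ≥0∞) with hS
    have hA_ne : A ≠ ⊤ := ENNReal.mul_ne_top ENNReal.ofReal_ne_top (by simp)
    have hS_ne : S ≠ ⊤ :=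
      ENNReal.sum_ne_top.2 (fun w _ => hd_ne w)
    have hnew : indivCost α s' u ≤ (A + ENNReal.ofReal α) + (1 + S) := by
      rw [indivCost, hs', Function.update_self, ← hs']
      gcongr
      · calc (ENNReal.ofReal α) * ((t1.card : ℕ) : ℝ≥0∞)
            ≤ ENNReal.ofReal α * (((s u).card + 1 : ℕ) : ℝ≥0∞) := by
              gcongr
              exact_mod_cast Finset.card_insert_le _ _
          _ = A + ENNReal.ofReal α := by
              rw [hA]; push_cast; ring
      · calc ∑ w : Fin n, (temporalDist (profLab s') u w : ℝ≥0∞)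
            = (temporalDist (profLab s') u v : ℝ≥0∞) +
              ∑ w ∈ Finset.univ.erase v, (temporalDist (profLab s') u w : ℝ≥0∞) :=
              (Finset.add_sum_erase _ (fun w => (temporalDist (profLab s') u w : ℝ≥0∞)) (Finset.mem_univ v)).symm
          _ ≤ 1 + S := by
              gcongr
              · exact_mod_cast hd'v
              · rw [hS]
                refine Finset.sum_le_sum (fun w _ => ?_)
                exact_mod_cast td_mono (profLab_mono hsub) u w
    have hold : A + (2 + S) ≤ indivCost α s u := by
      rw [indivCost]
      gcongr
      calc (2 : ℝ≥0∞) + S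
          ≤ (temporalDist (profLab s) u v : ℝ≥0∞) +
            ∑ w ∈ Finset.univ.erase v, (temporalDist (profLab s) u w : ℝ≥0∞) := by
            gcongr
            exact_mod_cast h2
        _ = ∑ w : Fin n, (temporalDist (profLab s) u w : ℝ≥0∞) :=
            Finset.add_sum_erase _ (fun w => (temporalDist (profLab s) u w : ℝ≥0∞)) (Finset.mem_univ v)
    refine lt_of_le_of_lt hnew (lt_of_lt_of_le ?_ hold)
    have hkey : (A + ENNReal.ofReal α) + 1 < A + 2 := by
      have h1 : ENNReal.ofReal α < 1 := ENNReal.ofReal_lt_one.2 hα1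
      calc (A + ENNReal.ofReal α) + 1 = A + (ENNReal.ofReal α + 1) := by ring
        _ < A + 2 := ENNReal.add_lt_add_left hA_ne (by
            calc ENNReal.ofReal α + 1 < 1 + 1 := ENNReal.add_lt_add_right ENNReal.one_ne_top h1
              _ = 2 := one_add_one_eq_two)
    calc (A + ENNReal.ofReal α) + (1 + S) = ((A + ENNReal.ofReal α) + 1) + S := by ring
      _ < (A + 2) + S := ENNReal.add_lt_add_right hS_ne hkey
      _ = A + (2 + S) := by ring
  obtain ⟨t, ht⟩ := Set.nonempty_iff_ne_empty.2 hlabne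
  exact ⟨le_antisymm (td_le_one _ huv ht) (one_le_td _ huv), hlabne⟩
end
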